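/- Given two paths P and P' in a graph with the same endpoints u and v, the path P may be transformed into P' by a finite sequence of reroutings, where a rerouting replaces a subpath of the current path between two of its vertices x and y by an internally disjoint x-y path. -/

import Mathlib

/-! Common definitions: multigraphs, walks, biased graphs, frame matroids. -/

universe u v

structure Multigraph (V : Type u) (E : Type v) where
  inc : E → Sym2 V

namespace Multigraph

variable {V : Type u} {E : Type v}

/-- An edge is a loop if its two endpoints coincide. -/
def IsLoop (G : Multigraph V E) (e : E) : Prop := (G.inc e).IsDiag

/-- The set of links (non-loop edges) incident to a vertex. -/
def delta (G : Multigraph V E) (x : V) : Set E := {e | x ∈ G.inc e ∧ ¬ G.IsLoop e}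

/-- The set of all edges (including loops) incident to a vertex. -/
def deltaPlus (G : Multigraph V E) (x : V) : Set E := {e | x ∈ G.inc e}

/-- The set of vertices incident with an edge of `X`. -/
def VSet (G : Multigraph V E) (X : Set E) : Set V := {x | ∃ e ∈ X, x ∈ G.inc e}

/-- Walks in a multigraph. -/
inductive Walk (G : Multigraph V E) : V → V → Type (max u v) where
  | nil (x : V) : Walk G x x
  | cons {x y z : V} (e : E) (h : G.inc e = s(x, y)) (t : Walk G y z) : Walk G x z

namespace Walk

variable {G : Multigraph V E}

/-- The list of edges of a walk. -/
def edgeList : {x y : V} → G.Walk x y → List E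
  | _, _, .nil _ => []
  | _, _, .cons e _ t => e :: t.edgeList

/-- The list of vertices of a walk (both endpoints included). -/
def vertList : {x y : V} → G.Walk x y → List V
  | _, _, .nil a => [a]
  | a, _, .cons _ _ t => a :: t.vertList

/-- The edge set of a walk. -/
def edgeSet {x y : V} (w : G.Walk x y) : Set E := {e | e ∈ w.edgeList}

/-- A walk is a path if it repeats no vertex. -/
def IsPath {x y : V} (w : G.Walk x y) : Prop := w.vertList.Nodup

/-- A closed walk is a cycle if it is nonempty, repeats no edge and repeats
no vertex except for its starting vertex.  (A loop gives a cycle of length one.) -/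
def IsCycle {x : V} (w : G.Walk x x) : Prop :=
  w.edgeList ≠ [] ∧ w.edgeList.Nodup ∧ w.vertList.dropLast.Nodup

end Walk

/-- `P` is the edge set of a path from `x` to `y`. -/
def IsPathSet (G : Multigraph V E) (x y : V) (P : Set E) : Prop :=
  ∃ w : G.Walk x y, w.IsPath ∧ w.edgeSet = P

/-- `C` is the edge set of a cycle. -/
def IsCycleSet (G : Multigraph V E) (C : Set E) : Prop :=
  ∃ (x : V) (w : G.Walk x x), w.IsCycle ∧ w.edgeSet = C

/-- Two vertices are connected using only edges of `X`. -/
def ConnectedTo (G : Multigraph V E) (X : Set E) (x y : V) : Prop :=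
  ∃ w : G.Walk x y, w.edgeSet ⊆ X

/-- A multigraph is connected if any two vertices are joined by a walk. -/
def ConnectedGraph (G : Multigraph V E) : Prop := ∀ x y : V, Nonempty (G.Walk x y)

/-- The subgraph induced by an edge set `X` is connected. -/
def SubConnected (G : Multigraph V E) (X : Set E) : Prop :=
  ∀ e ∈ X, ∀ f ∈ X, ∃ x y, x ∈ G.inc e ∧ y ∈ G.inc f ∧ G.ConnectedTo X x y

/-- A theta subgraph: two distinct vertices joined by three internally disjoint paths. -/
def IsTheta (G : Multigraph V E) (x y : V) (P₁ P₂ P₃ : Set E) : Prop :=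
  x ≠ y ∧ G.IsPathSet x y P₁ ∧ G.IsPathSet x y P₂ ∧ G.IsPathSet x y P₃ ∧
    Disjoint P₁ P₂ ∧ Disjoint P₂ P₃ ∧ Disjoint P₁ P₃ ∧
    G.VSet P₁ ∩ G.VSet P₂ ⊆ {x, y} ∧ G.VSet P₂ ∩ G.VSet P₃ ⊆ {x, y} ∧
    G.VSet P₁ ∩ G.VSet P₃ ⊆ {x, y}

/-- A proper separation of a multigraph, given as a partition of the edge set:
each side must contain a vertex not met by the other side. -/
def IsProperSep (G : Multigraph V E) (X Y : Set E) : Prop :=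
  X ∪ Y = Set.univ ∧ Disjoint X Y ∧
    (G.VSet X \ G.VSet Y).Nonempty ∧ (G.VSet Y \ G.VSet X).Nonempty

/-- A multigraph is `k`-connected if it is connected and every proper separation
has order at least `k`. -/
def KConnected (G : Multigraph V E) (k : ℕ) : Prop :=
  G.ConnectedGraph ∧ ∀ X Y : Set E, G.IsProperSep X Y → k ≤ (G.VSet X ∩ G.VSet Y).ncard

/-- The connected component of the edge `e` in the subgraph induced by `X`. -/
def edgeComponent (G : Multigraph V E) (X : Set E) (e : E) : Set E :=
  {f | f ∈ X ∧ ∃ x y, x ∈ G.inc e ∧ y ∈ G.inc f ∧ G.ConnectedTo X x y}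

/-- The set of connected components (as edge sets) of the subgraph induced by `X`. -/
def components (G : Multigraph V E) (X : Set E) : Set (Set E) :=
  {D | ∃ e ∈ X, D = G.edgeComponent X e}

/-- One step of rerouting a `u`-`v` path: replace a subpath `R` (with endpoints `x,y`)
of `P` by an `x`-`y` path `Q` that is internally disjoint from `P`. -/
def RerouteStep (G : Multigraph V E) (u v : V) (P P' : Set E) : Prop :=
  G.IsPathSet u v P ∧ G.IsPathSet u v P' ∧
    ∃ x y R Q, G.IsPathSet x y R ∧ G.IsPathSet x y Q ∧ R ⊆ P ∧
      Disjoint Q (P \ R) ∧ G.VSet Q ∩ G.VSet P ⊆ {x, y} ∧ P' = (P \ R) ∪ Q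

end Multigraph

/-- A biased graph: a multigraph together with a collection of balanced cycles
satisfying the theta property. -/
structure BiasedGraph (V : Type u) (E : Type v) extends Multigraph V E where
  Balanced : Set E → Prop
  balanced_isCycle : ∀ C, Balanced C → toMultigraph.IsCycleSet C
  theta_property : ∀ x y P₁ P₂ P₃, toMultigraph.IsTheta x y P₁ P₂ P₃ →
    Balanced (P₁ ∪ P₂) → Balanced (P₂ ∪ P₃) → Balanced (P₁ ∪ P₃)

namespace BiasedGraph

variable {V : Type u} {E : Type v}

/-- A balancing vertex: every unbalanced cycle passes through it. -/
def BalancingVertex (Ω : BiasedGraph V E) (u : V) : Prop :=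
  ∀ C, Ω.toMultigraph.IsCycleSet C → ¬ Ω.Balanced C → ∃ e ∈ C, u ∈ Ω.inc e

/-- `C` is an unbalanced cycle of `Ω`. -/
def IsUnbalancedCycle (Ω : BiasedGraph V E) (C : Set E) : Prop :=
  Ω.toMultigraph.IsCycleSet C ∧ ¬ Ω.Balanced C

/-- Every cycle contained in `X` is balanced. -/
def BalancedSub (Ω : BiasedGraph V E) (X : Set E) : Prop :=
  ∀ C ⊆ X, Ω.toMultigraph.IsCycleSet C → Ω.Balanced C

/-- `e ~ f`: either `e = f` or some balanced cycle contains both. -/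
def LinkRel (Ω : BiasedGraph V E) (e f : E) : Prop :=
  e = f ∨ ∃ C, Ω.toMultigraph.IsCycleSet C ∧ Ω.Balanced C ∧ e ∈ C ∧ f ∈ C

/-- The same relation, with the balanced cycle restricted to lie inside `A`. -/
def LinkRelIn (Ω : BiasedGraph V E) (A : Set E) (e f : E) : Prop :=
  e = f ∨ ∃ C, C ⊆ A ∧ Ω.toMultigraph.IsCycleSet C ∧ Ω.Balanced C ∧ e ∈ C ∧ f ∈ C

/-- `S` is an unbalancing class of `delta u`: a (nonempty) equivalence class of `~`. -/
def IsUnbalancingClass (Ω : BiasedGraph V E) (u : V) (S : Set E) : Prop :=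
  S.Nonempty ∧ S ⊆ Ω.toMultigraph.delta u ∧
    ∀ e ∈ S, ∀ f ∈ Ω.toMultigraph.delta u, (f ∈ S ↔ Ω.LinkRel e f)

/-- `delta u` has exactly three unbalancing classes within the edge set `A`. -/
def HasThreeClassesIn (Ω : BiasedGraph V E) (u : V) (A : Set E) : Prop :=
  ∃ e₁ e₂ e₃, e₁ ∈ Ω.toMultigraph.delta u ∩ A ∧ e₂ ∈ Ω.toMultigraph.delta u ∩ A ∧
    e₃ ∈ Ω.toMultigraph.delta u ∩ A ∧
    ¬ Ω.LinkRelIn A e₁ e₂ ∧ ¬ Ω.LinkRelIn A e₁ e₃ ∧ ¬ Ω.LinkRelIn A e₂ e₃ ∧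
    ∀ f ∈ Ω.toMultigraph.delta u ∩ A,
      Ω.LinkRelIn A f e₁ ∨ Ω.LinkRelIn A f e₂ ∨ Ω.LinkRelIn A f e₃

/-- Tight handcuffs: two unbalanced cycles meeting in exactly one vertex. -/
def IsTightHandcuff (Ω : BiasedGraph V E) (X : Set E) : Prop :=
  ∃ C₁ C₂, Ω.IsUnbalancedCycle C₁ ∧ Ω.IsUnbalancedCycle C₂ ∧ Disjoint C₁ C₂ ∧
    (∃ x, Ω.toMultigraph.VSet C₁ ∩ Ω.toMultigraph.VSet C₂ = {x}) ∧ X = C₁ ∪ C₂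

/-- Loose handcuffs: two vertex-disjoint unbalanced cycles joined by a path meeting
each cycle only in an endpoint. -/
def IsLooseHandcuff (Ω : BiasedGraph V E) (X : Set E) : Prop :=
  ∃ C₁ C₂ P x y, Ω.IsUnbalancedCycle C₁ ∧ Ω.IsUnbalancedCycle C₂ ∧
    Disjoint (Ω.toMultigraph.VSet C₁) (Ω.toMultigraph.VSet C₂) ∧
    Ω.toMultigraph.IsPathSet x y P ∧ Disjoint P (C₁ ∪ C₂) ∧
    Ω.toMultigraph.VSet P ∩ Ω.toMultigraph.VSet C₁ = {x} ∧
    Ω.toMultigraph.VSet P ∩ Ω.toMultigraph.VSet C₂ = {y} ∧ X = C₁ ∪ C₂ ∪ P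

/-- A contrabalanced theta: a theta subgraph all three of whose cycles are unbalanced. -/
def IsContraTheta (Ω : BiasedGraph V E) (X : Set E) : Prop :=
  ∃ x y P₁ P₂ P₃, Ω.toMultigraph.IsTheta x y P₁ P₂ P₃ ∧
    ¬ Ω.Balanced (P₁ ∪ P₂) ∧ ¬ Ω.Balanced (P₂ ∪ P₃) ∧ ¬ Ω.Balanced (P₁ ∪ P₃) ∧
    X = P₁ ∪ P₂ ∪ P₃

/-- The circuits of the frame matroid of a biased graph. -/
def FrameCircuit (Ω : BiasedGraph V E) (X : Set E) : Prop :=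
  (Ω.toMultigraph.IsCycleSet X ∧ Ω.Balanced X) ∨ Ω.IsTightHandcuff X ∨
    Ω.IsLooseHandcuff X ∨ Ω.IsContraTheta X

/-- The number of balanced components of the subgraph induced by `X`. -/
noncomputable def numBalComponents (Ω : BiasedGraph V E) (X : Set E) : ℕ :=
  {D | D ∈ Ω.toMultigraph.components X ∧ Ω.BalancedSub D}.ncard

end BiasedGraph

section MatroidDefs

variable {α : Type*}

/-- A circuit of a matroid: a minimal dependent set. -/
def MCircuit (M : Matroid α) (C : Set α) : Prop :=
  C ⊆ M.E ∧ ¬ M.Indep C ∧ ∀ D ⊂ C, M.Indep D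

/-- A hyperplane: a maximal proper flat. -/
def MHyperplane (M : Matroid α) (H : Set α) : Prop :=
  M.IsFlat H ∧ H ≠ M.E ∧ ∀ F, M.IsFlat F → H ⊆ F → F = H ∨ F = M.E

/-- A cocircuit: a circuit of the dual matroid. -/
def MCocircuit (M : Matroid α) (K : Set α) : Prop := MCircuit (Matroid.dual M) K

open scoped Matroid in
/-- Deletion of a set of elements. -/
def MDelete (M : Matroid α) (D : Set α) : Matroid α := M ↾ (M.E \ D)

/-- Contraction of a set of elements. -/
def MContract (M : Matroid α) (C : Set α) : Matroid α :=
  Matroid.dual (MDelete (Matroid.dual M) C)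

/-- `N` is a minor of `M`. -/
def IsMinorOf (N M : Matroid α) : Prop := ∃ C D, N = MDelete (MContract M C) D

/-- The rank of a set in a matroid (junk value if unbounded). -/
noncomputable def mRank (M : Matroid α) (X : Set α) : ℕ :=
  sSup {n : ℕ | ∃ I, M.Indep I ∧ I ⊆ X ∧ I.ncard = n}

/-- A matroid is connected if any two elements lie on a common circuit. -/
def MatroidConnected (M : Matroid α) : Prop :=
  M.E.Nonempty ∧ ∀ e ∈ M.E, ∀ f ∈ M.E, e = f ∨ ∃ C, MCircuit M C ∧ e ∈ C ∧ f ∈ C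

/-- A `k`-separation of a matroid. -/
def MatroidKSeparation (M : Matroid α) (X Y : Set α) (k : ℕ) : Prop :=
  X ∪ Y = M.E ∧ Disjoint X Y ∧ k ≤ X.ncard ∧ k ≤ Y.ncard ∧
    mRank M X + mRank M Y + 1 = mRank M M.E + k

/-- A matroid is 3-connected if it has no `k`-separation for `k < 3`. -/
def Matroid3Connected (M : Matroid α) : Prop :=
  ∀ X Y (k : ℕ), k ≤ 2 → ¬ MatroidKSeparation M X Y k

/-- A matroid is graphic if its circuits are exactly the cycles of some multigraph. -/
def IsGraphic (M : Matroid α) : Prop :=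
  ∃ (W : Type) (G : Multigraph W α), ∀ C, MCircuit M C ↔ G.IsCycleSet C

/-- A matroid has a `U_{2,4}` minor. -/
def HasU24Minor (M : Matroid α) : Prop :=
  ∃ N : Matroid α, IsMinorOf N M ∧ N.E.ncard = 4 ∧
    ∀ C, MCircuit N C ↔ C ⊆ N.E ∧ C.ncard = 3

end MatroidDefs

/-- `M` is the frame matroid of the biased graph `Ω` (on ground set all of `E`). -/
def IsFrameMatroidOf {V E : Type*} (M : Matroid E) (Ω : BiasedGraph V E) : Prop :=
  M.E = Set.univ ∧ ∀ C, MCircuit M C ↔ Ω.FrameCircuit C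

open scoped Matroid in
/-- A vertex is committed: the complement of its edge star is a connected
nongraphic hyperplane of the frame matroid. -/
def BiasedGraph.IsCommitted {V E : Type*} (Ω : BiasedGraph V E) (M : Matroid E) (x : V) : Prop :=
  MHyperplane M (Ω.toMultigraph.deltaPlus x)ᶜ ∧
    MatroidConnected (M ↾ (Ω.toMultigraph.deltaPlus x)ᶜ) ∧
    ¬ IsGraphic (M ↾ (Ω.toMultigraph.deltaPlus x)ᶜ)

/-- `Ω'` is a roll-up of `Ω` at the balancing vertex `u`: some (possibly empty)
unbalancing class of links at `u` is replaced by unbalanced loops at their other endpoints. -/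
def BiasedGraph.IsRollUpOf {V E : Type*} (Ω' Ω : BiasedGraph V E) (u : V) : Prop :=
  ∃ S : Set E, (S = ∅ ∨ Ω.IsUnbalancingClass u S) ∧
    (∀ e ∉ S, Ω'.inc e = Ω.inc e) ∧
    (∀ e ∈ S, ∃ w, w ≠ u ∧ Ω.inc e = s(u, w) ∧ Ω'.inc e = s(w, w)) ∧
    (∀ C, Ω'.Balanced C ↔ (Ω.Balanced C ∧ C ∩ S = ∅))



namespace Multigraph
namespace Walk
variable {V : Type u} {E : Type v} {G : Multigraph V E}

/-- append of walks -/
def append : {x y z : V} → G.Walk x y → G.Walk y z → G.Walk x z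
  | _, _, _, .nil _, w => w
  | _, _, _, .cons e h t, w => .cons e h (t.append w)

@[simp] lemma edgeList_append {x y z : V} (W₁ : G.Walk x y) (W₂ : G.Walk y z) :
    (W₁.append W₂).edgeList = W₁.edgeList ++ W₂.edgeList := by
  induction W₁ with
  | nil => rfl
  | cons e h t ih => simp [append, edgeList, ih]

lemma vertList_ne_nil {x y : V} (W : G.Walk x y) : W.vertList ≠ [] := by
  cases W <;> simp [vertList]

lemma start_mem_vertList {x y : V} (W : G.Walk x y) : x ∈ W.vertList := by
  cases W <;> simp [vertList]

lemma vertList_eq_dropLast {x y : V} (W : G.Walk x y) :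
    W.vertList = W.vertList.dropLast ++ [y] := by
  induction W with
  | nil a => rfl
  | cons e h t ih =>
      show _ :: t.vertList = (_ :: t.vertList).dropLast ++ [_]
      rw [List.dropLast_cons_of_ne_nil (vertList_ne_nil t), List.cons_append]
      exact congrArg _ ih

lemma end_mem_vertList {x y : V} (W : G.Walk x y) : y ∈ W.vertList := by
  rw [vertList_eq_dropLast]; simp

lemma vertList_append {x y z : V} (W₁ : G.Walk x y) (W₂ : G.Walk y z) :
    (W₁.append W₂).vertList = W₁.vertList.dropLast ++ W₂.vertList := by
  induction W₁ with
  | nil => rfl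
  | cons e h t ih =>
      show _ :: (t.append W₂).vertList = (_ :: t.vertList).dropLast ++ W₂.vertList
      rw [List.dropLast_cons_of_ne_nil (vertList_ne_nil t), List.cons_append, ih]

lemma mem_vertList_append_left {x y z : V} {W₁ : G.Walk x y} {W₂ : G.Walk y z} {a : V}
    (h : a ∈ W₁.vertList) : a ∈ (W₁.append W₂).vertList := by
  rw [vertList_append]
  rw [vertList_eq_dropLast] at h
  rcases List.mem_append.mp h with h | h
  · exact List.mem_append_left _ h
  · simp only [List.mem_singleton] at h
    subst h; exact List.mem_append_right _ (start_mem_vertList W₂)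

lemma mem_vertList_append_right {x y z : V} {W₁ : G.Walk x y} {W₂ : G.Walk y z} {a : V}
    (h : a ∈ W₂.vertList) : a ∈ (W₁.append W₂).vertList := by
  rw [vertList_append]; exact List.mem_append_right _ h

lemma mem_vertList_of_mem_inc {x y : V} (W : G.Walk x y) {f : E} {a : V}
    (hf : f ∈ W.edgeList) (ha : a ∈ G.inc f) : a ∈ W.vertList := by
  induction W with
  | nil => simp [edgeList] at hf
  | cons e h t ih =>
      rcases List.mem_cons.mp hf with rfl | hf
      · rw [h, Sym2.mem_iff] at ha
        rcases ha with rfl | rfl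
        · exact start_mem_vertList _
        · exact List.mem_cons_of_mem _ (start_mem_vertList t)
      · exact List.mem_cons_of_mem _ (ih hf)

lemma exists_mem_inc_dropLast {x y : V} (W : G.Walk x y) {f : E}
    (hf : f ∈ W.edgeList) : ∃ a ∈ G.inc f, a ∈ W.vertList.dropLast := by
  induction W with
  | nil => simp [edgeList] at hf
  | cons e h t ih =>
      rw [show (Walk.cons e h t).vertList = _ :: t.vertList from rfl,
        List.dropLast_cons_of_ne_nil (vertList_ne_nil t)]
      rcases List.mem_cons.mp hf with rfl | hf
      · exact ⟨_, by rw [h]; exact Sym2.mem_mk_left _ _, List.mem_cons_self⟩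
      · obtain ⟨a, ha, ha'⟩ := ih hf
        exact ⟨a, ha, List.mem_cons_of_mem _ ha'⟩

lemma IsPath.tail {x y z : V} {e : E} {h : G.inc e = s(x, y)} {t : G.Walk y z}
    (hp : (Walk.cons e h t).IsPath) : t.IsPath := (List.nodup_cons.mp hp).2

lemma IsPath.start_not_mem {x y z : V} {e : E} {h : G.inc e = s(x, y)} {t : G.Walk y z}
    (hp : (Walk.cons e h t).IsPath) : x ∉ t.vertList := (List.nodup_cons.mp hp).1

lemma IsPath.edgeList_eq_nil {x : V} {W : G.Walk x x} (hp : W.IsPath) :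
    W.edgeList = [] := by
  cases W with
  | nil => rfl
  | cons e h t => exact absurd (end_mem_vertList t) hp.start_not_mem

lemma IsPath.edgeList_nodup {x y : V} {W : G.Walk x y} (hp : W.IsPath) :
    W.edgeList.Nodup := by
  induction W with
  | nil => exact List.nodup_nil
  | cons e h t ih =>
      refine List.nodup_cons.mpr ⟨fun he => ?_, ih hp.tail⟩
      exact hp.start_not_mem
        (mem_vertList_of_mem_inc t he (by rw [h]; exact Sym2.mem_mk_left _ _))

lemma IsPath.of_append_right {x y z : V} {W₁ : G.Walk x y} {W₂ : G.Walk y z}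
    (hp : (W₁.append W₂).IsPath) : W₂.IsPath := by
  rw [IsPath, vertList_append] at hp
  exact hp.of_append_right

lemma IsPath.of_append_left {x y z : V} {W₁ : G.Walk x y} {W₂ : G.Walk y z}
    (hp : (W₁.append W₂).IsPath) : W₁.IsPath := by
  rw [IsPath, vertList_append, List.nodup_append] at hp
  obtain ⟨h1, h2, h3⟩ := hp
  rw [IsPath, vertList_eq_dropLast, List.nodup_append]
  refine ⟨h1, List.nodup_singleton _, fun a ha b hay => ?_⟩
  simp only [List.mem_singleton] at hay
  subst hay
  exact h3 a ha _ (start_mem_vertList W₂)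

/-- split a walk at a vertex on it -/
lemma exists_split {x z : V} (W : G.Walk x z) {y : V} (hy : y ∈ W.vertList) :
    ∃ (W₁ : G.Walk x y) (W₂ : G.Walk y z), W = W₁.append W₂ := by
  induction W with
  | nil a =>
      simp only [vertList, List.mem_singleton] at hy
      subst hy
      exact ⟨.nil _, .nil _, rfl⟩
  | cons e h t ih =>
      rcases List.mem_cons.mp hy with rfl | hy
      · exact ⟨.nil _, .cons e h t, rfl⟩
      · obtain ⟨t₁, t₂, rfl⟩ := ih hy
        exact ⟨.cons e h t₁, t₂, rfl⟩

/-- first vertex of a walk lying in `S` (the end lies in `S`) -/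
lemma exists_first_return (S : Set V) {b z : V} (T : G.Walk b z) (hz : z ∈ S) :
    ∃ (y : V) (Q : G.Walk b y) (D : G.Walk y z), T = Q.append D ∧ y ∈ S ∧
      ∀ a ∈ Q.vertList, a = y ∨ a ∉ S := by
  induction T with
  | nil a => exact ⟨a, .nil a, .nil a, rfl, hz, by simp [vertList]⟩
  | cons e h t ih =>
      rename_i x₀ y₀ z₀
      by_cases hb : x₀ ∈ S
      · exact ⟨x₀, .nil x₀, .cons e h t, rfl, hb, by simp [vertList]⟩
      · obtain ⟨y, Q, D, rfl, hy, hQ⟩ := ih hz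
        refine ⟨y, .cons e h Q, D, rfl, hy, fun a ha => ?_⟩
        rcases List.mem_cons.mp ha with rfl | ha
        · exact Or.inr hb
        · exact hQ a ha


@[simp] lemma edgeList_nil (a : V) : (Walk.nil (G := G) a).edgeList = [] := rfl

@[simp] lemma edgeSet_nil (a : V) : (Walk.nil (G := G) a).edgeSet = ∅ := by
  ext f; simp [edgeSet, edgeList]

lemma edgeSet_cons {x y z : V} (e : E) (h : G.inc e = s(x, y)) (t : G.Walk y z) :
    (Walk.cons e h t).edgeSet = insert e t.edgeSet := by
  ext f; simp [edgeSet, edgeList]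

lemma edgeSet_append {x y z : V} (W₁ : G.Walk x y) (W₂ : G.Walk y z) :
    (W₁.append W₂).edgeSet = W₁.edgeSet ∪ W₂.edgeSet := by
  ext f; simp [edgeSet, edgeList_append]

lemma finite_edgeSet {x y : V} (W : G.Walk x y) : W.edgeSet.Finite :=
  W.edgeList.finite_toSet

end Walk

open Walk in
private lemma reroute_core {G : Multigraph V E} :
    ∀ {w v : V} (A : G.Walk w v), A.IsPath → ∀ (B : G.Walk w v), B.IsPath →
      A.edgeSet ≠ B.edgeSet →
      ∃ (x y : V) (R Q : Set E) (W₁ : G.Walk w v) (g : E),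
        G.IsPathSet x y R ∧ G.IsPathSet x y Q ∧ R ⊆ A.edgeSet ∧
        Disjoint Q (A.edgeSet \ R) ∧
        (∀ z ∈ G.VSet Q, z ∈ A.vertList → z = x ∨ z = y) ∧
        (∀ z ∈ G.VSet Q, z ∈ B.vertList) ∧
        Q ⊆ B.edgeSet ∧
        W₁.IsPath ∧ W₁.edgeSet = (A.edgeSet \ R) ∪ Q ∧
        (∀ z ∈ W₁.vertList, z ∈ A.vertList ∨ z ∈ B.vertList) ∧
        g ∈ A.edgeSet ∧ g ∉ B.edgeSet ∧ g ∉ W₁.edgeSet ∧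
        W₁.edgeSet \ B.edgeSet ⊆ A.edgeSet \ B.edgeSet := by
  intro w v A
  induction A with
  | nil a =>
      intro _ B hB hne
      exact absurd (by ext f; simp [hB.edgeList_eq_nil, Walk.edgeSet, Walk.edgeList_nil]) hne
  | cons e hA t ih =>
      rename_i w a v
      intro hPath B hPB hne
      cases B with
      | nil =>
          exact absurd (by ext f; simp [hPath.edgeList_eq_nil, Walk.edgeSet, Walk.edgeList_nil]) hne
      | cons e' hB tB =>
          rename_i b
          by_cases hee : e = e'
          · -- common first edge: recurse
            subst hee
            have hab : a = b := by
              rw [hA] at hB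
              rcases Sym2.eq_iff.mp hB with ⟨_, h2⟩ | ⟨h1, h2⟩
              · exact h2
              · exact h2.trans h1
            subst hab
            have heT : e ∉ t.edgeSet := fun h =>
              hPath.start_not_mem (t.mem_vertList_of_mem_inc h
                (by rw [hA]; exact Sym2.mem_mk_left _ _))
            have heT' : e ∉ tB.edgeSet := fun h =>
              hPB.start_not_mem (tB.mem_vertList_of_mem_inc h
                (by rw [hB]; exact Sym2.mem_mk_left _ _))
            have hne' : t.edgeSet ≠ tB.edgeSet := fun h => hne (by
              rw [edgeSet_cons, edgeSet_cons, h])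
            obtain ⟨x, y, R, Q, W₁, g, hR1, hQ1, hRsub, hdisj, hQA, hQB, hQsubB,
              hW₁p, hW₁e, hW₁v, hg1, hg2, hg3, hsub⟩ := ih hPath.tail tB hPB.tail hne'
            have heR : e ∉ R := fun h => heT (hRsub h)
            have heQ : e ∉ Q := fun h => heT' (hQsubB h)
            have heW₁ : w ∉ W₁.vertList := fun h => by
              rcases hW₁v w h with h' | h'
              · exact hPath.start_not_mem h'
              · exact hPB.start_not_mem h'
            refine ⟨x, y, R, Q, .cons e hA W₁, g, hR1, hQ1, ?_, ?_, ?_, ?_, ?_, ?_, ?_,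
              ?_, ?_, ?_, ?_, ?_⟩
            · rw [edgeSet_cons]; exact hRsub.trans (Set.subset_insert _ _)
            · rw [edgeSet_cons]
              rw [Set.insert_diff_of_notMem _ heR]
              refine Set.disjoint_left.mpr fun f hf hmem => ?_
              rcases Set.mem_insert_iff.mp hmem with rfl | hmem
              · exact heQ hf
              · exact Set.disjoint_left.mp hdisj hf hmem
            · intro z hz hzA
              rcases List.mem_cons.mp hzA with rfl | hzA
              · exact absurd (hQB z hz) hPB.start_not_mem
              · exact hQA z hz hzA
            · intro z hz
              exact List.mem_cons_of_mem _ (hQB z hz)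
            · rw [edgeSet_cons]; exact hQsubB.trans (Set.subset_insert _ _)
            · exact List.nodup_cons.mpr ⟨heW₁, hW₁p⟩
            · rw [edgeSet_cons, edgeSet_cons, Set.insert_diff_of_notMem _ heR,
                Set.insert_union, hW₁e]
            · intro z hz
              rcases List.mem_cons.mp hz with rfl | hz
              · exact Or.inl (start_mem_vertList _)
              · rcases hW₁v z hz with h' | h'
                · exact Or.inl (List.mem_cons_of_mem _ h')
                · exact Or.inr (List.mem_cons_of_mem _ h')
            · rw [edgeSet_cons]; exact Set.mem_insert_of_mem _ hg1
            · rw [edgeSet_cons]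
              intro h
              rcases Set.mem_insert_iff.mp h with rfl | h
              · exact heT hg1
              · exact hg2 h
            · rw [edgeSet_cons]
              intro h
              rcases Set.mem_insert_iff.mp h with rfl | h
              · exact heT hg1
              · exact hg3 h
            · simp only [edgeSet_cons]
              intro f hf
              obtain ⟨hf1, hf2⟩ := hf
              have hfe : f ≠ e := by rintro rfl; exact hf2 (Set.mem_insert _ _)
              have : f ∈ W₁.edgeSet \ tB.edgeSet :=
                ⟨(Set.mem_insert_iff.mp hf1).resolve_left hfe,
                 fun h => hf2 (Set.mem_insert_of_mem _ h)⟩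
              obtain ⟨h1, h2⟩ := hsub this
              exact ⟨Set.mem_insert_of_mem _ h1, fun h =>
                h2 ((Set.mem_insert_iff.mp h).resolve_left hfe)⟩
          · -- divergence
            set S : Set V := {z | z ∈ (Walk.cons e hA t).vertList} with hS
            have hvS : v ∈ S := end_mem_vertList _
            obtain ⟨y, Q₀, D, hTD, hyS, hQ₀⟩ := exists_first_return S tB hvS
            have hyQ₀ : y ∈ Q₀.vertList := end_mem_vertList _
            have hQ₀tB : ∀ z ∈ Q₀.vertList, z ∈ tB.vertList := fun z hz => by
              rw [hTD]; exact mem_vertList_append_left hz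
            have hyw : y ≠ w := fun h => hPB.start_not_mem (h ▸ hQ₀tB y hyQ₀)
            obtain ⟨A₁, A₂, hAsplit⟩ := exists_split (Walk.cons e hA t) hyS
            have hA₁ : A₁.IsPath := (hAsplit ▸ hPath).of_append_left
            have hA₂ : A₂.IsPath := (hAsplit ▸ hPath).of_append_right
            have hvA : (Walk.cons e hA t).vertList
                = A₁.vertList.dropLast ++ A₂.vertList := by
              rw [hAsplit, vertList_append]
            have hnodupA : ((Walk.cons e hA t).vertList).Nodup := hPath
            have hQ₀path : Q₀.IsPath := (hTD ▸ hPB.tail).of_append_left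
            have hQwpath : (Walk.cons e' hB Q₀).IsPath :=
              List.nodup_cons.mpr ⟨fun h => hPB.start_not_mem (hQ₀tB w h), hQ₀path⟩
            have hyNotDrop : y ∉ Q₀.vertList.dropLast := by
              intro h
              have h2 := hQ₀path
              rw [IsPath, vertList_eq_dropLast, List.nodup_append] at h2
              exact h2.2.2 y h y (List.mem_singleton_self y) rfl
            have hQ₀edges : ∀ f ∈ Q₀.edgeList, f ∉ (Walk.cons e hA t).edgeList := by
              intro f hf hfA
              obtain ⟨z, hz, hzd⟩ := exists_mem_inc_dropLast Q₀ hf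
              have hzQ : z ∈ Q₀.vertList := (List.dropLast_sublist _).subset hzd
              rcases hQ₀ z hzQ with rfl | hzS
              · exact hyNotDrop hzd
              · exact hzS (mem_vertList_of_mem_inc _ hfA hz)
            have hfirstA : ∀ f ∈ (Walk.cons e hA t).edgeList, w ∈ G.inc f → f = e := by
              intro f hf hw
              rcases List.mem_cons.mp hf with rfl | hf
              · rfl
              · exact absurd (mem_vertList_of_mem_inc t hf hw) hPath.start_not_mem
            have hfirstB : ∀ f ∈ (Walk.cons e' hB tB).edgeList, w ∈ G.inc f → f = e' := by
              intro f hf hw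
              rcases List.mem_cons.mp hf with rfl | hf
              · rfl
              · exact absurd (mem_vertList_of_mem_inc tB hf hw) hPB.start_not_mem
            have he'A : e' ∉ (Walk.cons e hA t).edgeList := fun h =>
              hee (hfirstA e' h (by rw [hB]; exact Sym2.mem_mk_left _ _)).symm
            have heB : e ∉ (Walk.cons e' hB tB).edgeList := fun h =>
              hee (hfirstB e h (by rw [hA]; exact Sym2.mem_mk_left _ _))
            have hQwA : ∀ f ∈ (Walk.cons e' hB Q₀).edgeList,
                f ∉ (Walk.cons e hA t).edgeList := by
              intro f hf
              rcases List.mem_cons.mp hf with rfl | hf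
              · exact he'A
              · exact hQ₀edges f hf
            have hwA₁ : w ∈ A₁.vertList.dropLast := by
              have h1 : w ∈ A₁.vertList := start_mem_vertList _
              rw [vertList_eq_dropLast] at h1
              rcases List.mem_append.mp h1 with h1 | h1
              · exact h1
              · exact absurd (List.mem_singleton.mp h1).symm hyw
            have hwA₂ : w ∉ A₂.vertList := by
              have h2 := hnodupA
              rw [hvA, List.nodup_append] at h2
              exact fun h => h2.2.2 w hwA₁ w h rfl
            have hA₂sub : ∀ z ∈ A₂.vertList, z ∈ (Walk.cons e hA t).vertList :=
              fun z hz => by rw [hvA]; exact List.mem_append_right _ hz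
            have hdropQw : (Walk.cons e' hB Q₀).vertList.dropLast
                = w :: Q₀.vertList.dropLast := by
              show (w :: Q₀.vertList).dropLast = _
              rw [List.dropLast_cons_of_ne_nil (vertList_ne_nil Q₀)]
            have hQwB : ∀ z ∈ (Walk.cons e' hB Q₀).vertList,
                z ∈ (Walk.cons e' hB tB).vertList := by
              intro z hz
              rcases List.mem_cons.mp hz with rfl | hz
              · exact start_mem_vertList _
              · exact List.mem_cons_of_mem _ (hQ₀tB z hz)
            have hW₁path : ((Walk.cons e' hB Q₀).append A₂).IsPath := by
              rw [IsPath, vertList_append, List.nodup_append]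
              refine ⟨List.Nodup.sublist (List.dropLast_sublist _) hQwpath, hA₂,
                fun z hz z' hz2 hzz => ?_⟩
              subst hzz
              rw [hdropQw] at hz
              rcases List.mem_cons.mp hz with rfl | hz
              · exact hwA₂ hz2
              · have hzQ : z ∈ Q₀.vertList := (List.dropLast_sublist _).subset hz
                rcases hQ₀ z hzQ with rfl | hzS
                · exact hyNotDrop hz
                · exact hzS (hA₂sub z hz2)
            have hEnodup : ((Walk.cons e hA t).edgeList).Nodup := hPath.edgeList_nodup
            have hEsplit : (Walk.cons e hA t).edgeList = A₁.edgeList ++ A₂.edgeList := by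
              rw [hAsplit, edgeList_append]
            have hEdisj : A₁.edgeList.Disjoint A₂.edgeList := by
              rw [hEsplit] at hEnodup
              exact List.disjoint_of_nodup_append hEnodup
            have hA₂eq : A₂.edgeSet = (Walk.cons e hA t).edgeSet \ A₁.edgeSet := by
              ext f
              simp only [edgeSet, Set.mem_setOf_eq, Set.mem_diff, hEsplit, List.mem_append]
              constructor
              · intro h
                exact ⟨Or.inr h, fun h1 => hEdisj h1 h⟩
              · rintro ⟨h | h, hn⟩
                · exact absurd h hn
                · exact h
            have hQsubB : (Walk.cons e' hB Q₀).edgeSet ⊆ (Walk.cons e' hB tB).edgeSet := by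
              intro f hf
              rcases List.mem_cons.mp hf with rfl | hf
              · exact List.mem_cons_self
              · show f ∈ (Walk.cons e' hB tB).edgeList
                rw [hTD]
                exact List.mem_cons_of_mem _
                  (by rw [edgeList_append]; exact List.mem_append_left _ hf)
            refine ⟨w, y, A₁.edgeSet, (Walk.cons e' hB Q₀).edgeSet,
              (Walk.cons e' hB Q₀).append A₂, e,
              ⟨A₁, hA₁, rfl⟩, ⟨Walk.cons e' hB Q₀, hQwpath, rfl⟩,
              ?_, ?_, ?_, ?_, hQsubB, hW₁path, ?_, ?_, List.mem_cons_self, heB, ?_, ?_⟩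
            · intro f hf
              rw [hAsplit, edgeSet_append]
              exact Set.mem_union_left _ hf
            · exact Set.disjoint_left.mpr fun f hf hm => hQwA f hf hm.1
            · intro z hz hzA
              obtain ⟨f, hf, hzf⟩ := hz
              have hzQw : z ∈ (Walk.cons e' hB Q₀).vertList :=
                mem_vertList_of_mem_inc _ hf hzf
              rcases List.mem_cons.mp hzQw with rfl | hz'
              · exact Or.inl rfl
              · rcases hQ₀ z hz' with rfl | hzS
                · exact Or.inr rfl
                · exact absurd hzA hzS
            · intro z hz
              obtain ⟨f, hf, hzf⟩ := hz
              exact hQwB z (mem_vertList_of_mem_inc _ hf hzf)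
            · rw [edgeSet_append, hA₂eq]
              exact Set.union_comm _ _
            · intro z hz
              rw [vertList_append] at hz
              rcases List.mem_append.mp hz with hz | hz
              · exact Or.inr (hQwB z ((List.dropLast_sublist _).subset hz))
              · exact Or.inl (hA₂sub z hz)
            · rw [edgeSet_append]
              rintro (h | h)
              · exact heB (hQsubB h)
              · exact hwA₂ (mem_vertList_of_mem_inc A₂ h
                  (by rw [hA]; exact Sym2.mem_mk_left _ _))
            · rintro f ⟨hf1, hf2⟩
              rw [edgeSet_append] at hf1
              rcases hf1 with hf | hf
              · exact absurd (hQsubB hf) hf2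
              · refine ⟨?_, hf2⟩
                rw [hAsplit, edgeSet_append]
                exact Set.mem_union_right _ hf

end Multigraph

/-- Any two `u`-`v` paths are related by a finite sequence of reroutings. -/
theorem stmt0 {V E : Type*} (G : Multigraph V E) (u v : V) (P P' : Set E)
    (hP : G.IsPathSet u v P) (hP' : G.IsPathSet u v P') :
    Relation.ReflTransGen (G.RerouteStep u v) P P' := by
  obtain ⟨WB, hWB, hWBe⟩ := hP'
  obtain ⟨WA, hWA, rfl⟩ := hP
  have key : ∀ (W : G.Walk u v), W.IsPath → W.edgeSet ≠ P' →
      ∃ (W₁ : G.Walk u v), W₁.IsPath ∧ G.RerouteStep u v W.edgeSet W₁.edgeSet ∧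
        (W₁.edgeSet \ P').ncard < (W.edgeSet \ P').ncard := by
    intro W hW hPP
    obtain ⟨x, y, R, Q, W₁, g, hR1, hQ1, hRsub, hdisj, hQA, hQB, hQsubB,
        hW₁p, hW₁e, hW₁v, hg1, hg2, hg3, hsub⟩ :=
      Multigraph.reroute_core W hW WB hWB (by rw [hWBe]; exact hPP)
    rw [hWBe] at hg2 hsub
    refine ⟨W₁, hW₁p, ⟨⟨W, hW, rfl⟩, ⟨W₁, hW₁p, rfl⟩, x, y, R, Q, hR1, hQ1, hRsub,
      hdisj, ?_, hW₁e.symm ▸ rfl⟩, ?_⟩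
    · rintro z ⟨hzQ, hzP⟩
      obtain ⟨f, hf, hzf⟩ := hzP
      rcases hQA z hzQ (W.mem_vertList_of_mem_inc hf hzf) with rfl | rfl
      · exact Set.mem_insert _ _
      · exact Set.mem_insert_of_mem _ rfl
    · apply Set.ncard_lt_ncard _ (W.finite_edgeSet.diff)
      constructor
      · intro f hf
        exact hsub hf
      · intro hcon
        exact hg3 (hcon ⟨hg1, hg2⟩).1
  suffices h : ∀ (n : ℕ) (W : G.Walk u v), W.IsPath → (W.edgeSet \ P').ncard ≤ n →
      Relation.ReflTransGen (G.RerouteStep u v) W.edgeSet P' from h _ WA hWA le_rfl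
  intro n
  induction n with
  | zero =>
      intro W hW hcard
      by_cases hPP : W.edgeSet = P'
      · exact hPP ▸ Relation.ReflTransGen.refl
      · obtain ⟨W₁, _, _, hlt⟩ := key W hW hPP
        omega
  | succ n ih =>
      intro W hW hcard
      by_cases hPP : W.edgeSet = P'
      · exact hPP ▸ Relation.ReflTransGen.refl
      · obtain ⟨W₁, hW₁p, hstep, hlt⟩ := key W hW hPP
        exact Relation.ReflTransGen.head hstep (ih W₁ hW₁p (by omega))
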